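/- With constant meeting rates and frictions growing without bound, firm sizes become uniform: the kernel K_r(t) = r(r+1)/(r + 2·min(t,1−t))² converges to 1 uniformly on [0,1] as r → ∞; consequently, for any integrable ℓ : [0,1] → ℝ, the function s_r(y) = ∫₀¹ r(r+1)·ℓ(x)/(r + 2·d(x,y))² dx converges uniformly in y to the constant ∫₀¹ ℓ(x) dx as r → ∞. -/

import Mathlib

open MeasureTheory

/-- Distance on the circle of circumference 1: `d(x,y) = min_{k ∈ ℤ} |x - y + k|`. -/
noncomputable def circleDist (x y : ℝ) : ℝ :=
  sInf {v : ℝ | ∃ k : ℤ, v = |x - y + (k : ℝ)|}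

lemma circleDist_eq (x y : ℝ) : circleDist x y = |x - y - round (x - y)| := by
  set t := x - y with ht
  apply le_antisymm
  · apply csInf_le
    · exact ⟨0, fun v ⟨k, hk⟩ => hk ▸ abs_nonneg _⟩
    · exact ⟨-round t, by push_cast; rw [ht]; congr 1⟩
  · refine le_csInf ⟨|t + ((0:ℤ):ℝ)|, ⟨0, rfl⟩⟩ ?_
    rintro v ⟨k, rfl⟩
    by_cases h : -k = round t
    · have : t + (k:ℝ) = t - round t := by rw [← h]; push_cast; ring
      rw [this]
    · have h1 : (1:ℝ) ≤ |(-k : ℝ) - (round t : ℝ)| := by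
        have : (-k : ℤ) - round t ≠ 0 := sub_ne_zero.mpr h
        have := Int.one_le_abs this
        calc (1:ℝ) ≤ |((-k - round t : ℤ) : ℝ)| := by exact_mod_cast this
          _ = |(-k : ℝ) - (round t : ℝ)| := by push_cast; ring_nf
      have h2 : |t - round t| ≤ 1/2 := abs_sub_round t
      have h3 : |(-k:ℝ) - round t| ≤ |(-k:ℝ) - t| + |t - round t| := abs_sub_le _ _ _
      have h4 : |t + (k:ℝ)| = |(-k:ℝ) - t| := by rw [abs_sub_comm]; ring_nf
      linarith

lemma circleDist_nonneg (x y : ℝ) : 0 ≤ circleDist x y := by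
  rw [circleDist_eq]; exact abs_nonneg _

lemma circleDist_le_half (x y : ℝ) : circleDist x y ≤ 1/2 := by
  rw [circleDist_eq]; exact abs_sub_round _

lemma kernel_bound {r m : ℝ} (hr : 1 ≤ r) (hm0 : 0 ≤ m) (hm : m ≤ 1/2) :
    |r * (r + 1) / (r + 2 * m) ^ 2 - 1| ≤ 2 / r := by
  have hr0 : (0:ℝ) < r := lt_of_lt_of_le one_pos hr
  have hd : (0:ℝ) < (r + 2 * m) ^ 2 := by positivity
  have heq : r * (r + 1) / (r + 2 * m) ^ 2 - 1
      = (r * (r + 1) - (r + 2 * m) ^ 2) / (r + 2 * m) ^ 2 := by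
    field_simp
  rw [heq, abs_div, abs_of_pos hd, div_le_div_iff₀ hd hr0]
  rcases abs_cases (r * (r + 1) - (r + 2 * m) ^ 2) with ⟨h1, _⟩ | ⟨h1, _⟩ <;> rw [h1] <;>
    nlinarith [sq_nonneg (r - 1), sq_nonneg m, sq_nonneg (r + 2*m)]

lemma measurable_circleDist (y : ℝ) : Measurable fun x : ℝ => circleDist x y := by
  simp only [circleDist_eq]
  have hround : Measurable fun t : ℝ => ((round t : ℤ) : ℝ) := by
    simp only [round_eq]
    exact (measurable_from_top).comp (Int.measurable_floor.comp (measurable_id.add_const _))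
  exact ((measurable_id.sub_const y).sub
    (hround.comp (measurable_id.sub_const y))).abs

lemma integral_bound (ℓ : ℝ → ℝ) (hl : IntervalIntegrable ℓ volume 0 1)
    {r : ℝ} (hr : 1 ≤ r) (y : ℝ) :
    |(∫ x in (0:ℝ)..1, r * (r + 1) * ℓ x / (r + 2 * circleDist x y) ^ 2)
      - ∫ x in (0:ℝ)..1, ℓ x| ≤ 2 / r * ∫ x in (0:ℝ)..1, |ℓ x| := by
  have hr0 : (0:ℝ) < r := lt_of_lt_of_le one_pos hr
  set g := fun x : ℝ => r * (r + 1) / (r + 2 * circleDist x y) ^ 2 with hg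
  have hd : ∀ x : ℝ, (0:ℝ) < (r + 2 * circleDist x y) ^ 2 := fun x => by
    have := circleDist_nonneg x y; positivity
  have hmeas : Measurable g :=
    measurable_const.div ((measurable_const.add
      ((measurable_circleDist y).const_mul 2)).pow measurable_const)
  have hgb : ∀ x, ‖g x‖ ≤ 2 := by
    intro x
    have h0 := circleDist_nonneg x y
    rw [Real.norm_eq_abs, abs_of_nonneg (by positivity : (0:ℝ) ≤ g x)]
    rw [hg, div_le_iff₀ (hd x)]
    nlinarith [sq_nonneg (circleDist x y)]
  have hF : IntervalIntegrable (fun x => g x * ℓ x) volume 0 1 := by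
    rw [intervalIntegrable_iff_integrableOn_Ioc_of_le (by norm_num)] at hl ⊢
    exact hl.bdd_mul hmeas.aestronglyMeasurable (Filter.Eventually.of_forall hgb)
  have hrw : (fun x => r * (r + 1) * ℓ x / (r + 2 * circleDist x y) ^ 2)
      = fun x => g x * ℓ x := funext fun x => by rw [hg]; ring
  rw [show (∫ x in (0:ℝ)..1, r * (r + 1) * ℓ x / (r + 2 * circleDist x y) ^ 2)
      = ∫ x in (0:ℝ)..1, g x * ℓ x from by rw [hrw]]
  rw [← intervalIntegral.integral_sub hF hl]
  have hptwise : ∀ x ∈ Set.Icc (0:ℝ) 1, |g x * ℓ x - ℓ x| ≤ 2 / r * |ℓ x| := by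
    intro x _
    have : g x * ℓ x - ℓ x = (g x - 1) * ℓ x := by ring
    rw [this, abs_mul]
    exact mul_le_mul_of_nonneg_right
      (kernel_bound hr (circleDist_nonneg x y) (circleDist_le_half x y)) (abs_nonneg _)
  calc |∫ x in (0:ℝ)..1, (g x * ℓ x - ℓ x)|
      ≤ ∫ x in (0:ℝ)..1, |g x * ℓ x - ℓ x| :=
        intervalIntegral.abs_integral_le_integral_abs (by norm_num)
    _ ≤ ∫ x in (0:ℝ)..1, 2 / r * |ℓ x| := by
        apply intervalIntegral.integral_mono_on (by norm_num) (hF.sub hl).abs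
          (hl.abs.const_mul _) hptwise
    _ = 2 / r * ∫ x in (0:ℝ)..1, |ℓ x| := intervalIntegral.integral_const_mul _ _


/-- With frictions growing without bound, the kernel converges uniformly to `1`
on `[0,1]`, and consequently for any integrable preference density `ℓ` the firm
size distribution converges uniformly to the constant `∫₀¹ ℓ`. -/
theorem large_frictions_uniformize (ℓ : ℝ → ℝ)
    (hl : IntervalIntegrable ℓ volume 0 1) :
    TendstoUniformlyOn
      (fun (r : ℝ) (t : ℝ) => r * (r + 1) / (r + 2 * min t (1 - t)) ^ 2)
      (fun _ => (1:ℝ)) Filter.atTop (Set.Icc 0 1) ∧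
    TendstoUniformlyOn
      (fun (r : ℝ) (y : ℝ) =>
        ∫ x in (0:ℝ)..1, r * (r + 1) * ℓ x / (r + 2 * circleDist x y) ^ 2)
      (fun _ => ∫ x in (0:ℝ)..1, ℓ x) Filter.atTop (Set.Icc 0 1) := by
  constructor
  · rw [Metric.tendstoUniformlyOn_iff]
    intro ε hε
    rw [Filter.eventually_atTop]
    refine ⟨max 1 (2 / ε + 1), fun r hrN t ht => ?_⟩
    have hr1 : 1 ≤ r := le_trans (le_max_left _ _) hrN
    have hr0 : (0:ℝ) < r := lt_of_lt_of_le one_pos hr1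
    have hr2 : 2 / ε + 1 ≤ r := le_trans (le_max_right _ _) hrN
    have hm0 : 0 ≤ min t (1 - t) := le_min ht.1 (by linarith [ht.2])
    have hm1 : min t (1 - t) ≤ 1/2 := by
      rcases min_le_iff.mpr (Or.inl (le_refl t)) with _
      cases le_total t (1/2) with
      | inl h => exact le_trans (min_le_left _ _) h
      | inr h => exact le_trans (min_le_right _ _) (by linarith)
    rw [Real.dist_eq, abs_sub_comm]
    have hb := kernel_bound hr1 hm0 hm1
    have : 2 / r < ε := by
      rw [div_lt_iff₀ hr0]
      have h1 : 2 / ε < r := by linarith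
      rw [div_lt_iff₀ hε] at h1
      nlinarith
    linarith [hb]
  · rw [Metric.tendstoUniformlyOn_iff]
    intro ε hε
    rw [Filter.eventually_atTop]
    set C := ∫ x in (0:ℝ)..1, |ℓ x| with hC
    have hC0 : 0 ≤ C := intervalIntegral.integral_nonneg (by norm_num)
      (fun x _ => abs_nonneg _)
    refine ⟨max 1 (2 * C / ε + 1), fun r hrN y hy => ?_⟩
    have hr1 : 1 ≤ r := le_trans (le_max_left _ _) hrN
    have hr0 : (0:ℝ) < r := lt_of_lt_of_le one_pos hr1
    have hr2 : 2 * C / ε + 1 ≤ r := le_trans (le_max_right _ _) hrN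
    rw [Real.dist_eq, abs_sub_comm]
    have hb := integral_bound ℓ hl hr1 y
    have : 2 / r * C < ε := by
      rw [div_mul_eq_mul_div, div_lt_iff₀ hr0]
      have h1 : 2 * C / ε < r := by linarith
      rw [div_lt_iff₀ hε] at h1
      nlinarith
    linarith [hb]
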